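/- arXiv:1904.10687 — 5 statements merged into one kernel-verified Lean document; each statement's English description precedes it below -/
import Mathlib

section
/- Let 0 ≤ β ≤ α ≤ 1. Then the plane is covered by the P-sets and by the Q-sets of the wave packet covering: ℝ² = P₀ ∪ ⋃_{(j,m,ℓ)∈I₀} P_{j,m,ℓ} = Q₀ ∪ ⋃_{(j,m,ℓ)∈I₀} Q_{j,m,ℓ}. -/
noncomputable section

open Real Set MeasureTheory Pointwise
open scoped ENNReal

/-- `ℝ²` with the Euclidean norm. -/
abbrev R2 : Type := EuclideanSpace ℝ (Fin 2)

/-- The vector `(a, b) ∈ ℝ²`. -/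
def vec2 (a b : ℝ) : R2 := (EuclideanSpace.equiv (Fin 2) ℝ).symm ![a, b]

/-- Action of a `2×2` matrix on `ℝ²`. -/
def mulV (M : Matrix (Fin 2) (Fin 2) ℝ) (x : R2) : R2 :=
  (EuclideanSpace.equiv (Fin 2) ℝ).symm (M.mulVec ((EuclideanSpace.equiv (Fin 2) ℝ) x))

/-- Rotation matrix through the angle `θ`. -/
def Rmat (θ : ℝ) : Matrix (Fin 2) (Fin 2) ℝ :=
  !![Real.cos θ, -Real.sin θ; Real.sin θ, Real.cos θ]

/-- The diagonal matrix `A_j = diag(2^{αj}, 2^{βj})`. -/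
def Amat (α β : ℝ) (j : ℕ) : Matrix (Fin 2) (Fin 2) ℝ :=
  !![(2:ℝ) ^ (α * (j:ℝ)), 0; 0, (2:ℝ) ^ (β * (j:ℝ))]

/-- The angle `Θ_{j,ℓ} = 2ℓ·(π/N)·2^{(β − 1)j}`, with `N = 10`. -/
def Theta (β : ℝ) (j ℓ : ℕ) : ℝ :=
  2 * (ℓ:ℝ) * (Real.pi / 10) * (2:ℝ) ^ ((β - 1) * (j:ℝ))

/-- The translation `c_{j,m} = (2^{j−1} + m·2^{αj}, 0)ᵗ`. -/
def cvec (α : ℝ) (j m : ℕ) : R2 :=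
  vec2 ((2:ℝ) ^ ((j:ℝ) - 1) + (m:ℝ) * (2:ℝ) ^ (α * (j:ℝ))) 0

/-- The base set `Q = (−ε, 1+ε) × (−1−ε, 1+ε)`. -/
def baseQ (ε : ℝ) : Set R2 :=
  {x : R2 | x 0 ∈ Set.Ioo (-ε) (1+ε) ∧ x 1 ∈ Set.Ioo (-1-ε) (1+ε)}

/-- `m_j^max = ⌈2^{(1−α)j−1}⌉`. -/
def mjmax (α : ℝ) (j : ℕ) : ℤ := ⌈(2:ℝ) ^ ((1-α) * (j:ℝ) - 1)⌉

/-- `ℓ_j^max = ⌈N·2^{(1−β)j}⌉`, with `N = 10`. -/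
def ljmax (β : ℝ) (j : ℕ) : ℤ := ⌈(10:ℝ) * (2:ℝ) ^ ((1-β) * (j:ℝ))⌉

/-- Membership of a triple `(j,m,ℓ)` in the index set
`I₀ = {(j,m,ℓ) ∈ ℕ × ℕ₀ × ℕ₀ : m ≤ m_j^max, ℓ ≤ ℓ_j^max}` (with `ℕ = {1,2,…}`). -/
def memI0 (α β : ℝ) (i : ℕ × ℕ × ℕ) : Prop :=
  1 ≤ i.1 ∧ (i.2.1 : ℤ) ≤ mjmax α i.1 ∧ (i.2.2 : ℤ) ≤ ljmax β i.1

/-- The set `Q_{j,m,ℓ} = R_{j,ℓ}(A_j·Q + c_{j,m})`. -/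
def Qset (α β ε : ℝ) (j m ℓ : ℕ) : Set R2 :=
  (fun x => mulV (Rmat (Theta β j ℓ)) (mulV (Amat α β j) x + cvec α j m)) '' baseQ ε

/-- The base set `P = [0,1] × [−1,1]`. -/
def baseP : Set R2 := {x : R2 | x 0 ∈ Set.Icc (0:ℝ) 1 ∧ x 1 ∈ Set.Icc (-1:ℝ) 1}

/-- The set `P_{j,m,ℓ} = R_{j,ℓ}(A_j·P + c_{j,m})`. -/
def Pset (α β : ℝ) (j m ℓ : ℕ) : Set R2 :=
  (fun x => mulV (Rmat (Theta β j ℓ)) (mulV (Amat α β j) x + cvec α j m)) '' baseP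

set_option maxHeartbeats 1000000

lemma mulV_apply0' (M : Matrix (Fin 2) (Fin 2) ℝ) (x : R2) :
    mulV M x 0 = M 0 0 * x 0 + M 0 1 * x 1 := by
  simp [mulV, Matrix.mulVec, dotProduct, Fin.sum_univ_two]

lemma mulV_apply1' (M : Matrix (Fin 2) (Fin 2) ℝ) (x : R2) :
    mulV M x 1 = M 1 0 * x 0 + M 1 1 * x 1 := by
  simp [mulV, Matrix.mulVec, dotProduct, Fin.sum_univ_two]

lemma vec2_apply0' (a b : ℝ) : vec2 a b 0 = a := by simp [vec2]

lemma vec2_apply1' (a b : ℝ) : vec2 a b 1 = b := by simp [vec2]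

lemma R2_ext' {x y : R2} (h0 : x 0 = y 0) (h1 : x 1 = y 1) : x = y := by
  ext i; fin_cases i; exacts [h0, h1]

lemma exists_polar' (x : R2) (h : 0 < ‖x‖) :
    ∃ φ, 0 ≤ φ ∧ φ < 2*π ∧ x 0 = ‖x‖ * Real.cos φ ∧ x 1 = ‖x‖ * Real.sin φ := by
  set r := ‖x‖ with hr
  have hnorm : r = Real.sqrt (x 0 ^ 2 + x 1 ^ 2) := by
    rw [hr, EuclideanSpace.norm_eq]; simp [Fin.sum_univ_two, sq_abs]
  set z : ℂ := ⟨x 0, x 1⟩ with hz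
  have habs : ‖z‖ = r := by
    rw [Complex.norm_def, Complex.normSq_mk, hnorm]; ring_nf
  have hre : x 0 = r * Real.cos z.arg := by rw [← habs, Complex.norm_mul_cos_arg]
  have him : x 1 = r * Real.sin z.arg := by rw [← habs, Complex.norm_mul_sin_arg]
  rcases le_or_gt 0 z.arg with ha | ha
  · exact ⟨z.arg, ha, lt_of_le_of_lt (Complex.arg_le_pi z) (by linarith [Real.pi_pos]),
      hre, him⟩
  · refine ⟨z.arg + 2*π, ?_, ?_, ?_, ?_⟩
    · linarith [Complex.neg_pi_lt_arg z, Real.pi_pos]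
    · linarith [Complex.arg_le_pi z]
    · rw [Real.cos_add_two_pi]; exact hre
    · rw [Real.sin_add_two_pi]; exact him

lemma covering_key' (α β : ℝ) (hβ0 : 0 ≤ β) (hβα : β ≤ α) (hα1 : α ≤ 1)
    (x : R2) (hx3 : 3 ≤ ‖x‖) :
    ∃ i : ℕ × ℕ × ℕ, memI0 α β i ∧ x ∈ Pset α β i.1 i.2.1 i.2.2 := by
  classical
  have hπu : π < 3.15 := Real.pi_lt_d2
  have hπl : 3 < π := by linarith [Real.pi_gt_d2]
  set r := ‖x‖ with hrdef
  have hr0 : (0:ℝ) < r := by linarith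
  set t : ℕ → ℝ := fun k => (π/5) * (2:ℝ) ^ ((β-1) * (k:ℝ)) with ht
  have htval : ∀ k : ℕ, t k = (π/5) * (2:ℝ) ^ ((β-1) * (k:ℝ)) := fun k => rfl
  have htpos : ∀ k, 0 < t k := fun k => by
    rw [htval]
    have := Real.rpow_pos_of_pos (by norm_num : (0:ℝ) < 2) ((β-1) * (k:ℝ))
    positivity
  have htle : ∀ k : ℕ, 1 ≤ k → t k ≤ π/5 := by
    intro k hk
    rw [htval]
    have h1 : (β-1) * (k:ℝ) ≤ 0 := by
      have : (1:ℝ) ≤ (k:ℝ) := by exact_mod_cast hk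
      nlinarith
    have h2 : (2:ℝ) ^ ((β-1) * (k:ℝ)) ≤ 1 :=
      Real.rpow_le_one_of_one_le_of_nonpos (by norm_num) h1
    have h4 : (0:ℝ) < (2:ℝ) ^ ((β-1) * (k:ℝ)) := Real.rpow_pos_of_pos (by norm_num) _
    nlinarith
  have hcoslb : ∀ k : ℕ, 1 ≤ k → (0.8:ℝ) ≤ Real.cos (t k) := by
    intro k hk
    have h1 := htle k hk
    have h2 := (htpos k).le
    have h3 := Real.one_sub_sq_div_two_le_cos (x := t k)
    nlinarith
  set G : ℕ → Prop := fun k => (2:ℝ) ^ ((k:ℝ) - 1) ≤ r * Real.cos (t k) with hG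
  have hGval : ∀ k : ℕ, G k ↔ (2:ℝ) ^ ((k:ℝ) - 1) ≤ r * Real.cos (t k) :=
    fun k => Iff.rfl
  have hG1 : G 1 := by
    rw [hGval]
    have := hcoslb 1 le_rfl
    norm_num
    nlinarith
  obtain ⟨n, hn⟩ := exists_nat_gt r
  have hnn : r < (2:ℝ) ^ ((n:ℝ)) := by
    have h1 : (n:ℝ) < (2:ℝ)^(n:ℕ) := by exact_mod_cast Nat.lt_two_pow_self
    rw [Real.rpow_natCast]; linarith
  have hGlarge : ∀ k : ℕ, (n:ℝ) ≤ (k:ℝ) - 1 → ¬ G k := by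
    intro k hk hGk
    rw [hGval] at hGk
    have h1 : (2:ℝ) ^ ((n:ℝ)) ≤ (2:ℝ) ^ ((k:ℝ)-1) :=
      Real.rpow_le_rpow_of_exponent_le (by norm_num) hk
    nlinarith [Real.cos_le_one (t k)]
  have hex : ∃ j : ℕ, 1 ≤ j ∧ G j ∧ ¬ G (j+1) := by
    refine ⟨Nat.findGreatest G (n+1), Nat.le_findGreatest (by omega) hG1,
      Nat.findGreatest_spec (P := G) (by omega : 1 ≤ n+1) hG1, ?_⟩
    set j : ℕ := Nat.findGreatest G (n+1) with hj
    have hjn : j ≤ n + 1 := Nat.findGreatest_le _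
    rcases le_or_gt (j+1) (n+1) with h | h
    · exact Nat.findGreatest_is_greatest (by omega) h
    · have hjeq : j = n + 1 := by omega
      apply hGlarge
      rw [hjeq]; push_cast; linarith
  obtain ⟨j, hj1, hGj, hnotG⟩ := hex
  clear hG1 hGlarge hnn hn
  have hE : (0:ℝ) < (2:ℝ) ^ (α * (j:ℝ)) := Real.rpow_pos_of_pos (by norm_num) _
  have hEβ : (0:ℝ) < (2:ℝ) ^ (β * (j:ℝ)) := Real.rpow_pos_of_pos (by norm_num) _
  have hP1 : (0:ℝ) < (2:ℝ) ^ ((j:ℝ) - 1) := Real.rpow_pos_of_pos (by norm_num) _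
  have hPj : (0:ℝ) < (2:ℝ) ^ ((j:ℝ)) := Real.rpow_pos_of_pos (by norm_num) _
  have h2j : (2:ℝ) ^ ((j:ℝ)) = 2 * (2:ℝ) ^ ((j:ℝ) - 1) := by
    rw [show (j:ℝ) = 1 + ((j:ℝ) - 1) by ring, Real.rpow_add (by norm_num)]
    norm_num
  have hr2 : r * Real.cos (t (j+1)) < (2:ℝ) ^ ((j:ℝ)) := by
    rw [hGval] at hnotG
    push_neg at hnotG
    have hcast : ((j+1:ℕ):ℝ) - 1 = (j:ℝ) := by push_cast; ring
    rwa [hcast] at hnotG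
  have hcosu : (0.8:ℝ) ≤ Real.cos (t (j+1)) := hcoslb (j+1) (by omega)
  have hrlt : r < 1.25 * (2:ℝ) ^ ((j:ℝ)) := by nlinarith
  have hu2 : (t (j+1))^2 ≤ (2:ℝ) ^ ((α-1) * (j:ℝ)) := by
    have hexp : (β-1) * ((j:ℝ)+1) + (β-1) * ((j:ℝ)+1) ≤ (α-1) * (j:ℝ) := by
      have hjr : (1:ℝ) ≤ (j:ℝ) := by exact_mod_cast hj1
      nlinarith
    have h1 : (2:ℝ) ^ ((β-1) * ((j:ℝ)+1)) * (2:ℝ) ^ ((β-1) * ((j:ℝ)+1))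
        ≤ (2:ℝ) ^ ((α-1) * (j:ℝ)) := by
      rw [← Real.rpow_add (by norm_num)]
      exact Real.rpow_le_rpow_of_exponent_le (by norm_num) hexp
    have h2 : (t (j+1))^2 = (π/5)^2 * ((2:ℝ) ^ ((β-1) * ((j:ℝ)+1)) *
        (2:ℝ) ^ ((β-1) * ((j:ℝ)+1))) := by
      rw [htval]; push_cast; ring
    have h3 : (π/5)^2 ≤ 1 := by nlinarith
    have h4 : (0:ℝ) < (2:ℝ) ^ ((β-1) * ((j:ℝ)+1)) := Real.rpow_pos_of_pos (by norm_num) _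
    nlinarith
  have hEeq : (2:ℝ) ^ ((j:ℝ)) * (2:ℝ) ^ ((α-1) * (j:ℝ)) = (2:ℝ) ^ (α * (j:ℝ)) := by
    rw [← Real.rpow_add (by norm_num)]; congr 1; ring
  have key2 : r < (2:ℝ) ^ ((j:ℝ)) + (2:ℝ) ^ (α * (j:ℝ)) := by
    have hcq := Real.one_sub_sq_div_two_le_cos (x := t (j+1))
    have hone : (2:ℝ) ^ ((α-1) * (j:ℝ)) ≤ 1 := by
      apply Real.rpow_le_one_of_one_le_of_nonpos (by norm_num)
      have hjr : (0:ℝ) ≤ (j:ℝ) := Nat.cast_nonneg j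
      nlinarith
    have p1 : (2:ℝ)^((j:ℝ)) * (t (j+1))^2 ≤ (2:ℝ)^(α*(j:ℝ)) := by
      calc (2:ℝ)^((j:ℝ)) * (t (j+1))^2 ≤ (2:ℝ)^((j:ℝ)) * (2:ℝ)^((α-1)*(j:ℝ)) :=
            mul_le_mul_of_nonneg_left hu2 hPj.le
        _ = (2:ℝ)^(α*(j:ℝ)) := hEeq
    have p2 : (2:ℝ)^((j:ℝ)) * (1 - (t (j+1))^2/2) ≤ (2:ℝ)^((j:ℝ)) * Real.cos (t (j+1)) :=
      mul_le_mul_of_nonneg_left hcq hPj.le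
    have p3 : 0.8 * (2:ℝ)^(α*(j:ℝ)) ≤ (2:ℝ)^(α*(j:ℝ)) * Real.cos (t (j+1)) := by
      nlinarith
    have h5 : (2:ℝ) ^ ((j:ℝ)) ≤ ((2:ℝ) ^ ((j:ℝ)) + (2:ℝ) ^ (α * (j:ℝ))) *
        Real.cos (t (j+1)) := by nlinarith
    nlinarith
  obtain ⟨φ, hφ0, hφ2π, hx0, hx1⟩ := exists_polar' x hr0
  set ℓ : ℕ := ⌊φ / t j⌋₊ with hℓ
  have hl1 : (ℓ:ℝ) * t j ≤ φ := by
    rw [hℓ]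
    calc (⌊φ / t j⌋₊:ℝ) * t j ≤ (φ / t j) * t j :=
          mul_le_mul_of_nonneg_right (Nat.floor_le (by positivity)) (htpos j).le
      _ = φ := by field_simp [(htpos j).ne']
  have hl2 : φ < ((ℓ:ℝ) + 1) * t j := by
    have h0 := Nat.lt_floor_add_one (φ / t j)
    calc φ = (φ / t j) * t j := by field_simp [(htpos j).ne']
      _ < ((ℓ:ℝ) + 1) * t j := by
          apply mul_lt_mul_of_pos_right _ (htpos j)
          rw [hℓ]; push_cast; exact h0
  have hlbound : (ℓ:ℤ) ≤ ljmax β j := by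
    have hrec : (2:ℝ) ^ ((1-β) * (j:ℝ)) * (2:ℝ) ^ ((β-1) * (j:ℝ)) = 1 := by
      rw [← Real.rpow_add (by norm_num)]
      rw [show (1-β) * (j:ℝ) + (β-1) * (j:ℝ) = 0 by ring, Real.rpow_zero]
    have h3 : (10:ℝ) * (2:ℝ) ^ ((1-β) * (j:ℝ)) * t j = 2 * π := by
      rw [htval]
      linear_combination (2 * π) * hrec
    have hlt : (ℓ:ℝ) < 10 * (2:ℝ) ^ ((1-β) * (j:ℝ)) := by
      have h5 : (ℓ:ℝ) * t j < (10 * (2:ℝ) ^ ((1-β) * (j:ℝ))) * t j := by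
        rw [h3]; linarith
      exact lt_of_mul_lt_mul_right h5 (htpos j).le
    have h6 : ((ℓ:ℤ):ℤ) < ⌈(10:ℝ) * (2:ℝ) ^ ((1-β) * (j:ℝ))⌉ := Int.lt_ceil.mpr (by
      push_cast; exact hlt)
    rw [ljmax]; omega
  set ψ : ℝ := φ - (ℓ:ℝ) * t j with hψ
  have hψ0 : 0 ≤ ψ := by rw [hψ]; linarith
  have hψlt : ψ < t j := by rw [hψ]; nlinarith [hl2]
  have htj5 : t j ≤ π/5 := htle j hj1
  have hsin0 : 0 ≤ Real.sin ψ :=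
    Real.sin_nonneg_of_nonneg_of_le_pi hψ0 (by nlinarith)
  have hsinle : Real.sin ψ ≤ ψ := Real.sin_le hψ0
  have hβeq : (2:ℝ) ^ ((j:ℝ)) * (2:ℝ) ^ ((β-1) * (j:ℝ)) = (2:ℝ) ^ (β * (j:ℝ)) := by
    rw [← Real.rpow_add (by norm_num)]; congr 1; ring
  have hy1b : r * Real.sin ψ ≤ (2:ℝ) ^ (β * (j:ℝ)) := by
    have h1 : r * Real.sin ψ ≤ r * ψ := mul_le_mul_of_nonneg_left hsinle hr0.le
    have h2 : r * ψ ≤ r * t j := mul_le_mul_of_nonneg_left hψlt.le hr0.le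
    have h3 : r * t j ≤ 1.25 * (2:ℝ) ^ ((j:ℝ)) * t j :=
      mul_le_mul_of_nonneg_right hrlt.le (htpos j).le
    have h4 : 1.25 * (2:ℝ) ^ ((j:ℝ)) * t j = 0.25 * π * (2:ℝ) ^ (β * (j:ℝ)) := by
      rw [htval]
      linear_combination (0.25 * π) * hβeq
    nlinarith [hEβ]
  have hGj' : (2:ℝ) ^ ((j:ℝ) - 1) ≤ r * Real.cos (t j) := (hGval j).1 hGj
  have hy0a : (2:ℝ) ^ ((j:ℝ) - 1) ≤ r * Real.cos ψ := by
    have hmono : Real.cos (t j) ≤ Real.cos ψ :=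
      Real.cos_le_cos_of_nonneg_of_le_pi hψ0 (by nlinarith) hψlt.le
    have := mul_le_mul_of_nonneg_left hmono hr0.le
    linarith
  have hy0b : r * Real.cos ψ < (2:ℝ) ^ ((j:ℝ)) + (2:ℝ) ^ (α * (j:ℝ)) := by
    nlinarith [Real.cos_le_one ψ]
  set D : ℝ := r * Real.cos ψ - (2:ℝ) ^ ((j:ℝ) - 1) with hD
  have hD0 : 0 ≤ D := by rw [hD]; linarith
  set m : ℕ := ⌊D / (2:ℝ) ^ (α * (j:ℝ))⌋₊ with hm
  have hm1 : (m:ℝ) * (2:ℝ) ^ (α * (j:ℝ)) ≤ D := by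
    calc (m:ℝ) * (2:ℝ) ^ (α * (j:ℝ)) ≤ (D / (2:ℝ) ^ (α * (j:ℝ))) * (2:ℝ) ^ (α * (j:ℝ)) :=
          mul_le_mul_of_nonneg_right (Nat.floor_le (by positivity)) hE.le
      _ = D := by field_simp
  have hm2 : D < ((m:ℝ) + 1) * (2:ℝ) ^ (α * (j:ℝ)) := by
    have h0 := Nat.lt_floor_add_one (D / (2:ℝ) ^ (α * (j:ℝ)))
    calc D = (D / (2:ℝ) ^ (α * (j:ℝ))) * (2:ℝ) ^ (α * (j:ℝ)) := by field_simp
      _ < ((m:ℝ) + 1) * (2:ℝ) ^ (α * (j:ℝ)) := by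
          apply mul_lt_mul_of_pos_right _ hE
          rw [hm]; push_cast; exact h0
  have hmbound : (m:ℤ) ≤ mjmax α j := by
    have hc : (2:ℝ) ^ ((j:ℝ) - 1) / (2:ℝ) ^ (α * (j:ℝ)) = (2:ℝ) ^ ((1-α) * (j:ℝ) - 1) := by
      rw [← Real.rpow_sub (by norm_num)]; congr 1; ring
    have hDlt : D < (2:ℝ) ^ ((j:ℝ) - 1) + (2:ℝ) ^ (α * (j:ℝ)) := by
      rw [hD]; rw [h2j] at hy0b; linarith
    have h1 : ((m:ℝ) - 1) * (2:ℝ) ^ (α * (j:ℝ)) < (2:ℝ) ^ ((j:ℝ) - 1) := by nlinarith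
    have hlt : (m:ℝ) - 1 < (2:ℝ) ^ ((1-α) * (j:ℝ) - 1) := by
      rw [← hc, lt_div_iff₀ hE]; exact h1
    have h6 : ((m:ℤ) - 1 : ℤ) < ⌈(2:ℝ) ^ ((1-α) * (j:ℝ) - 1)⌉ := Int.lt_ceil.mpr (by
      push_cast; exact hlt)
    rw [mjmax]; omega
  refine ⟨(j, m, ℓ), ⟨hj1, hmbound, hlbound⟩, ?_⟩
  have hΘ : Theta β j ℓ = (ℓ:ℝ) * t j := by rw [Theta, htval]; ring
  rw [Pset, Set.mem_image]
  refine ⟨vec2 ((D - (m:ℝ) * (2:ℝ) ^ (α * (j:ℝ))) / (2:ℝ) ^ (α * (j:ℝ)))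
    (r * Real.sin ψ / (2:ℝ) ^ (β * (j:ℝ))), ⟨?_, ?_⟩, ?_⟩
  · rw [vec2_apply0']
    constructor
    · exact div_nonneg (by linarith) hE.le
    · rw [div_le_one hE]; linarith
  · rw [vec2_apply1']
    constructor
    · have h0 : 0 ≤ r * Real.sin ψ / (2:ℝ) ^ (β * (j:ℝ)) := by positivity
      linarith
    · rw [div_le_one hEβ]; exact hy1b
  · have hφeq : φ = Theta β j ℓ + ψ := by rw [hψ, hΘ]; ring
    apply R2_ext'
    · rw [hx0, mulV_apply0']
      simp only [PiLp.add_apply, mulV_apply0', mulV_apply1']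
      simp only [Rmat, Amat, cvec, vec2_apply0', vec2_apply1', Matrix.cons_val',
        Matrix.cons_val_zero, Matrix.cons_val_one, Matrix.head_cons, Matrix.empty_val',
        Matrix.cons_val_fin_one, Matrix.head_fin_const, Matrix.of_apply]
      rw [hφeq, Real.cos_add, hD]
      field_simp
      ring
    · rw [hx1, mulV_apply1']
      simp only [PiLp.add_apply, mulV_apply0', mulV_apply1']
      simp only [Rmat, Amat, cvec, vec2_apply0', vec2_apply1', Matrix.cons_val',
        Matrix.cons_val_zero, Matrix.cons_val_one, Matrix.head_cons, Matrix.empty_val',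
        Matrix.cons_val_fin_one, Matrix.head_fin_const, Matrix.of_apply]
      rw [hφeq, Real.sin_add, hD]
      field_simp
      ring

/-- For `0 ≤ β ≤ α ≤ 1`, the plane is covered by the `P`-sets and by the
`Q`-sets of the wave packet covering:
`ℝ² = P₀ ∪ ⋃_{(j,m,ℓ)∈I₀} P_{j,m,ℓ} = Q₀ ∪ ⋃_{(j,m,ℓ)∈I₀} Q_{j,m,ℓ}`,
where `P₀ = B₃(0)` and `Q₀ = B₄(0)`. -/
theorem wavePacket_covering_covers (α β ε : ℝ)
    (hβ0 : 0 ≤ β) (hβα : β ≤ α) (hα1 : α ≤ 1) (hε : ε ∈ Set.Ioo (0:ℝ) (1/32)) :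
    (Metric.ball (0:R2) 3 ∪
        ⋃ (i : ℕ × ℕ × ℕ) (_ : memI0 α β i), Pset α β i.1 i.2.1 i.2.2)
      = (Set.univ : Set R2) ∧
    (Metric.ball (0:R2) 4 ∪
        ⋃ (i : ℕ × ℕ × ℕ) (_ : memI0 α β i), Qset α β ε i.1 i.2.1 i.2.2)
      = (Set.univ : Set R2) := by
  have hε0 : 0 < ε := hε.1
  have hPQ : ∀ j m ℓ : ℕ, Pset α β j m ℓ ⊆ Qset α β ε j m ℓ := by
    intro j m ℓ
    apply Set.image_mono
    intro w hw
    simp only [baseP, Set.mem_setOf_eq, Set.mem_Icc] at hw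
    simp only [baseQ, Set.mem_setOf_eq, Set.mem_Ioo]
    obtain ⟨⟨h00, h01⟩, h10, h11⟩ := hw
    exact ⟨⟨by linarith, by linarith⟩, by linarith, by linarith⟩
  constructor
  · ext x
    simp only [Set.mem_union, Set.mem_iUnion, Set.mem_univ, iff_true]
    rcases lt_or_ge ‖x‖ 3 with h | h
    · exact Or.inl (mem_ball_zero_iff.mpr h)
    · obtain ⟨i, hi, hx⟩ := covering_key' α β hβ0 hβα hα1 x h
      exact Or.inr ⟨i, hi, hx⟩
  · ext x
    simp only [Set.mem_union, Set.mem_iUnion, Set.mem_univ, iff_true]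
    rcases lt_or_ge ‖x‖ 3 with h | h
    · exact Or.inl (mem_ball_zero_iff.mpr (h.trans (by norm_num)))
    · obtain ⟨i, hi, hx⟩ := covering_key' α β hβ0 hβα hα1 x h
      exact Or.inr ⟨i, hi, hPQ _ _ _ hx⟩
end
end

section
/- Let 0 ≤ β ≤ α ≤ 1, let (j,m,ℓ) ∈ I₀, and let ξ ∈ Q_{j,m,ℓ}. Then 2^{j−2} < 2^{j−1} + 2^{αj}·(m − ε) ≤ |ξ| ≤ 2^{j−1} + 2^{αj}·(m + 2 + 2ε) ≤ 2^j + 2^{αj}·(3 + 2ε) < 2^{j+3}, and moreover there exists φ ∈ ℝ such that ξ = |ξ|·(cos φ, sin φ) and |φ − Θ_{j,ℓ}| ≤ 4·(1 + ε)·2^{(β−1)j}. -/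
set_option maxHeartbeats 2000000


noncomputable section

open Real Set MeasureTheory Pointwise
open scoped ENNReal

lemma mulV_apply' (M : Matrix (Fin 2) (Fin 2) ℝ) (x : R2) (i : Fin 2) :
    mulV M x i = M i 0 * x 0 + M i 1 * x 1 := by
  fin_cases i <;> simp [mulV, Matrix.mulVec, dotProduct, Fin.sum_univ_two]

lemma norm_R2' (x : R2) : ‖x‖ = Real.sqrt (x 0 ^ 2 + x 1 ^ 2) := by
  rw [EuclideanSpace.norm_eq]
  simp [Fin.sum_univ_two, Real.norm_eq_abs, sq_abs]

lemma abs_arctan_le' (x : ℝ) : |Real.arctan x| ≤ |x| := by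
  have key : ∀ y : ℝ, 0 ≤ y → Real.arctan y ≤ y := by
    intro y hy
    calc Real.arctan y ≤ Real.tan (Real.arctan y) :=
          Real.le_tan (by rw [← Real.arctan_zero]
                          exact Real.arctan_strictMono.monotone hy)
            (Real.arctan_lt_pi_div_two y)
      _ = y := Real.tan_arctan y
  rcases le_or_gt 0 x with h | h
  · rw [abs_of_nonneg (by rw [← Real.arctan_zero]; exact Real.arctan_strictMono.monotone h),
      abs_of_nonneg h]
    exact key x h
  · rw [abs_of_nonpos (by rw [← Real.arctan_zero]
                          exact Real.arctan_strictMono.monotone h.le), abs_of_neg h]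
    have := key (-x) (by linarith)
    rw [Real.arctan_neg] at this
    linarith

/-- Norm and angle estimates for elements of `Q_{j,m,ℓ}`:
if `(j,m,ℓ) ∈ I₀` and `ξ ∈ Q_{j,m,ℓ}`, then
`2^{j−2} < 2^{j−1} + 2^{αj}(m − ε) ≤ |ξ| ≤ 2^{j−1} + 2^{αj}(m + 2 + 2ε)
  ≤ 2^j + 2^{αj}(3 + 2ε) < 2^{j+3}`,
and there is `φ ∈ ℝ` with `ξ = |ξ|·(cos φ, sin φ)` and
`|φ − Θ_{j,ℓ}| ≤ 4(1 + ε)·2^{(β−1)j}`. -/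
theorem wavePacket_norm_and_angle (α β ε : ℝ)
    (hβ0 : 0 ≤ β) (hβα : β ≤ α) (hα1 : α ≤ 1) (hε : ε ∈ Set.Ioo (0:ℝ) (1/32))
    (j m ℓ : ℕ) (hi : memI0 α β (j, m, ℓ)) (ξ : R2) (hξ : ξ ∈ Qset α β ε j m ℓ) :
    ((2:ℝ) ^ ((j:ℝ) - 2) < (2:ℝ) ^ ((j:ℝ) - 1) + (2:ℝ) ^ (α * (j:ℝ)) * ((m:ℝ) - ε) ∧
     (2:ℝ) ^ ((j:ℝ) - 1) + (2:ℝ) ^ (α * (j:ℝ)) * ((m:ℝ) - ε) ≤ ‖ξ‖ ∧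
     ‖ξ‖ ≤ (2:ℝ) ^ ((j:ℝ) - 1) + (2:ℝ) ^ (α * (j:ℝ)) * ((m:ℝ) + 2 + 2 * ε) ∧
     (2:ℝ) ^ ((j:ℝ) - 1) + (2:ℝ) ^ (α * (j:ℝ)) * ((m:ℝ) + 2 + 2 * ε)
        ≤ (2:ℝ) ^ (j:ℝ) + (2:ℝ) ^ (α * (j:ℝ)) * (3 + 2 * ε) ∧
     (2:ℝ) ^ (j:ℝ) + (2:ℝ) ^ (α * (j:ℝ)) * (3 + 2 * ε) < (2:ℝ) ^ ((j:ℝ) + 3)) ∧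
    (∃ φ : ℝ, ξ = ‖ξ‖ • vec2 (Real.cos φ) (Real.sin φ) ∧
       |φ - Theta β j ℓ| ≤ 4 * (1 + ε) * (2:ℝ) ^ ((β - 1) * (j:ℝ))) := by
  obtain ⟨hε0, hε32⟩ := hε
  obtain ⟨x, hx, rfl⟩ := hξ
  obtain ⟨⟨hx0l, hx0r⟩, hx1l, hx1r⟩ := hx
  beta_reduce
  set θ := Theta β j ℓ with hθdef
  set a := (2:ℝ) ^ (α * (j:ℝ)) with hadef
  set b := (2:ℝ) ^ (β * (j:ℝ)) with hbdef
  set P := (2:ℝ) ^ ((j:ℝ) - 1) with hPdef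
  have ha0 : 0 < a := Real.rpow_pos_of_pos two_pos _
  have hb0 : 0 < b := Real.rpow_pos_of_pos two_pos _
  have hP0 : 0 < P := Real.rpow_pos_of_pos two_pos _
  have hj1 : (1:ℝ) ≤ (j:ℝ) := by exact_mod_cast hi.1
  have hj0 : (0:ℝ) ≤ (j:ℝ) := by linarith
  have hba : b ≤ a :=
    Real.rpow_le_rpow_of_exponent_le one_le_two (mul_le_mul_of_nonneg_right hβα hj0)
  have haj : a ≤ (2:ℝ) ^ (j:ℝ) :=
    Real.rpow_le_rpow_of_exponent_le one_le_two
      (by calc α * (j:ℝ) ≤ 1 * (j:ℝ) := mul_le_mul_of_nonneg_right hα1 hj0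
          _ = (j:ℝ) := one_mul _)
  have h2j : (2:ℝ) ^ (j:ℝ) = 2 * P := by
    rw [hPdef, show (j:ℝ) = 1 + ((j:ℝ) - 1) by ring, Real.rpow_add two_pos, Real.rpow_one]
    ring_nf
  have h2jm2 : (2:ℝ) ^ ((j:ℝ) - 2) = P / 2 := by
    rw [hPdef, show (j:ℝ) - 2 = ((j:ℝ) - 1) + (-1) by ring, Real.rpow_add two_pos,
      Real.rpow_neg_one]
    ring_nf
  have h2j3 : (2:ℝ) ^ ((j:ℝ) + 3) = 16 * P := by
    rw [hPdef, show (j:ℝ) + 3 = ((j:ℝ) - 1) + 4 by ring, Real.rpow_add two_pos]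
    rw [show (4:ℝ) = ((4:ℕ):ℝ) by norm_num, Real.rpow_natCast]
    ring_nf
  have haP : a ≤ 2 * P := h2j ▸ haj
  have hma : (m:ℝ) * a ≤ P + a := by
    have h1 : (m:ℝ) ≤ (2:ℝ) ^ ((1-α) * (j:ℝ) - 1) + 1 := by
      have h2 := hi.2.1
      simp only [memI0, mjmax] at h2
      have h3 : ((m:ℤ):ℝ) ≤ ((⌈(2:ℝ) ^ ((1-α) * (j:ℝ) - 1)⌉ : ℤ) : ℝ) := by exact_mod_cast h2
      have h4 := (Int.ceil_lt_add_one ((2:ℝ) ^ ((1-α) * (j:ℝ) - 1))).le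
      push_cast at h3 ⊢
      linarith
    have h5 : (2:ℝ) ^ ((1-α) * (j:ℝ) - 1) * a = P := by
      rw [hadef, hPdef, ← Real.rpow_add two_pos]
      congr 1
      ring
    have h6 := mul_le_mul_of_nonneg_right h1 ha0.le
    linarith [h5, h6]
  have ham : (0:ℝ) ≤ (m:ℝ) * a := mul_nonneg (Nat.cast_nonneg m) ha0.le
  have haε : a * ε < P / 16 := by
    have h1 : a * ε ≤ 2 * P * ε := mul_le_mul_of_nonneg_right haP hε0.le
    have h2 : 2 * P * ε < 2 * P * (1/32) :=
      mul_lt_mul_of_pos_left hε32 (by linarith)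
    linarith
  -- components
  set u0 : ℝ := a * x 0 + (P + (m:ℝ) * a) with hu0def
  set u1 : ℝ := b * x 1 with hu1def
  have hw0 : (mulV (Amat α β j) x + cvec α j m) 0 = u0 := by
    show mulV (Amat α β j) x 0 + cvec α j m 0 = u0
    rw [mulV_apply']
    show a * x 0 + 0 * x 1 + (P + (m:ℝ) * a) = u0
    rw [hu0def]; ring
  have hw1 : (mulV (Amat α β j) x + cvec α j m) 1 = u1 := by
    show mulV (Amat α β j) x 1 + cvec α j m 1 = u1
    rw [mulV_apply']
    show 0 * x 0 + b * x 1 + 0 = u1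
    rw [hu1def]; ring
  set ξ := mulV (Rmat θ) (mulV (Amat α β j) x + cvec α j m) with hξdef
  have R00 : Rmat θ 0 0 = Real.cos θ := rfl
  have R01 : Rmat θ 0 1 = -Real.sin θ := rfl
  have R10 : Rmat θ 1 0 = Real.sin θ := rfl
  have R11 : Rmat θ 1 1 = Real.cos θ := rfl
  have h0 : ξ 0 = Real.cos θ * u0 - Real.sin θ * u1 := by
    rw [hξdef, mulV_apply', hw0, hw1, R00, R01]
    ring
  have h1 : ξ 1 = Real.sin θ * u0 + Real.cos θ * u1 := by
    rw [hξdef, mulV_apply', hw0, hw1, R10, R11]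
  have hnorm : ‖ξ‖ = Real.sqrt (u0 ^ 2 + u1 ^ 2) := by
    rw [norm_R2', h0, h1]
    congr 1
    linear_combination (u0 ^ 2 + u1 ^ 2) * Real.sin_sq_add_cos_sq θ
  -- bounds on u0, u1 (these still mention x)
  have hu0low : P + a * ((m:ℝ) - ε) ≤ u0 := by
    have h := mul_le_mul_of_nonneg_left hx0l.le ha0.le
    rw [hu0def]; linarith
  have hu0up : u0 ≤ P + (m:ℝ) * a + a * (1 + ε) := by
    have h := mul_le_mul_of_nonneg_left hx0r.le ha0.le
    rw [hu0def]; linarith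
  have hu1abs : |u1| ≤ b * (1 + ε) := by
    rw [hu1def, abs_mul, abs_of_pos hb0]
    exact mul_le_mul_of_nonneg_left (abs_le.2 ⟨by linarith, by linarith⟩) hb0.le
  -- discard x
  clear hw0 hw1
  clear hξdef hu0def hu1def
  clear_value ξ u0 u1
  clear hx0l hx0r hx1l hx1r x
  have hu0pos : 0 < u0 := by linarith
  have hu0half : P / 2 ≤ u0 := by linarith
  have hu1sq : u1 ^ 2 ≤ (b * (1 + ε)) ^ 2 := by
    have h := pow_le_pow_left₀ (abs_nonneg u1) hu1abs 2
    rwa [sq_abs] at h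
  -- norm bounds
  have hnlow : P + a * ((m:ℝ) - ε) ≤ ‖ξ‖ := by
    rw [hnorm]
    calc P + a * ((m:ℝ) - ε) ≤ u0 := hu0low
      _ = Real.sqrt (u0 ^ 2) := (Real.sqrt_sq hu0pos.le).symm
      _ ≤ Real.sqrt (u0 ^ 2 + u1 ^ 2) := Real.sqrt_le_sqrt (by linarith [sq_nonneg u1])
  have hεa : 0 ≤ a * (1 + ε) := mul_nonneg ha0.le (by linarith)
  have hUnn : (0:ℝ) ≤ P + a * ((m:ℝ) + 2 + 2 * ε) := by
    have := mul_pos ha0 hε0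
    linarith
  have hnup : ‖ξ‖ ≤ P + a * ((m:ℝ) + 2 + 2 * ε) := by
    rw [hnorm, show P + a * ((m:ℝ) + 2 + 2 * ε)
        = Real.sqrt ((P + a * ((m:ℝ) + 2 + 2 * ε)) ^ 2) from (Real.sqrt_sq hUnn).symm]
    apply Real.sqrt_le_sqrt
    have hA : u0 ^ 2 ≤ (P + (m:ℝ) * a + a * (1 + ε)) ^ 2 := pow_le_pow_left₀ hu0pos.le hu0up 2
    have hBb : b * (1 + ε) ≤ a * (1 + ε) := mul_le_mul_of_nonneg_right hba (by linarith)
    have hB : u1 ^ 2 ≤ (a * (1 + ε)) ^ 2 :=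
      le_trans hu1sq (pow_le_pow_left₀ (mul_nonneg hb0.le (by linarith)) hBb 2)
    have hAB : 0 ≤ (P + (m:ℝ) * a + a * (1 + ε)) * (a * (1 + ε)) :=
      mul_nonneg (by linarith) hεa
    linarith [hA, hB, hAB]
  refine ⟨⟨?_, hnlow, hnup, ?_, ?_⟩, ?_⟩
  · rw [h2jm2]; linarith
  · rw [h2j]; linarith
  · rw [h2j, h2j3]
    have := mul_pos ha0 hε0
    linarith
  -- angle part
  · have hbeta : (2:ℝ) ^ ((β - 1) * (j:ℝ)) = b / (2 * P) := by
      rw [hbdef, hPdef, show (β - 1) * (j:ℝ) = β * (j:ℝ) - (1 + ((j:ℝ) - 1)) by ring,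
        Real.rpow_sub two_pos, Real.rpow_add two_pos, Real.rpow_one]
    set t : ℝ := u1 / u0 with htdef
    have hsum0 : 0 < u0 ^ 2 + u1 ^ 2 := by linarith [sq_nonneg u1, pow_pos hu0pos 2]
    have hr0 : 0 < Real.sqrt (u0 ^ 2 + u1 ^ 2) := Real.sqrt_pos.2 hsum0
    have hkey : Real.sqrt (1 + t ^ 2) = Real.sqrt (u0 ^ 2 + u1 ^ 2) / u0 := by
      rw [eq_div_iff hu0pos.ne', ← Real.sqrt_sq hu0pos.le, ← Real.sqrt_mul (by positivity)]
      rw [Real.sqrt_sq hu0pos.le]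
      congr 1
      rw [htdef]
      field_simp
    have hcos : Real.sqrt (u0 ^ 2 + u1 ^ 2) * Real.cos (Real.arctan t) = u0 := by
      rw [Real.cos_arctan, hkey]
      field_simp
    have hsin : Real.sqrt (u0 ^ 2 + u1 ^ 2) * Real.sin (Real.arctan t) = u1 := by
      rw [Real.sin_arctan, hkey, htdef]
      field_simp
    refine ⟨θ + Real.arctan t, ?_, ?_⟩
    · ext i
      fin_cases i
      · show ξ 0 = ‖ξ‖ * Real.cos (θ + Real.arctan t)
        rw [h0, hnorm, Real.cos_add]
        linear_combination (-Real.cos θ) * hcos + Real.sin θ * hsin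
      · show ξ 1 = ‖ξ‖ * Real.sin (θ + Real.arctan t)
        rw [h1, hnorm, Real.sin_add]
        linear_combination (-Real.sin θ) * hcos + (-Real.cos θ) * hsin
    · rw [show θ + Real.arctan t - θ = Real.arctan t by ring, hbeta]
      have h6 : |Real.arctan t| ≤ |t| := abs_arctan_le' t
      have h7 : |t| = |u1| / u0 := by rw [htdef, abs_div, abs_of_pos hu0pos]
      have h8 : |u1| / u0 ≤ b * (1 + ε) / (P / 2) :=
        div_le_div₀ (mul_nonneg hb0.le (by linarith)) hu1abs (by linarith) hu0half
      have h9 : b * (1 + ε) / (P / 2) = 4 * (1 + ε) * (b / (2 * P)) := by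
        field_simp
        ring
      calc |Real.arctan t| ≤ |t| := h6
        _ = |u1| / u0 := h7
        _ ≤ b * (1 + ε) / (P / 2) := h8
        _ = 4 * (1 + ε) * (b / (2 * P)) := h9
end
end

section
/- Let 0 ≤ β ≤ α ≤ 1 and let (j,m,ℓ), (j',m',ℓ') ∈ I₀. If Q_{j,m,ℓ} ∩ Q_{j',m',ℓ'} ≠ ∅, then min over k ∈ {−2,−1,0,1,2} of |Θ_{j,ℓ} − Θ_{j',ℓ'} − 2πk| is at most 4·(1 + ε)·(2^{(β−1)j} + 2^{(β−1)j'}). -/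
noncomputable section

open Real Set MeasureTheory Pointwise
open scoped ENNReal

lemma my_arcsin_le {s : ℝ} (h0 : 0 ≤ s) (h1 : s ≤ 1) : Real.arcsin s ≤ π/2 * s := by
  rcases eq_or_lt_of_le h0 with h|h
  · simp [← h]
  rcases eq_or_lt_of_le h1 with h'|h'
  · rw [h']; simp [Real.arcsin_one]
  rw [Real.arcsin_le_iff_le_sin' ⟨by nlinarith [Real.pi_pos], by nlinarith [Real.pi_pos]⟩]
  have := Real.lt_sin_mul h h'
  linarith

lemma my_abs_arcsin (t : ℝ) : |Real.arcsin t| = Real.arcsin |t| := by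
  rcases le_or_gt 0 t with h|h
  · rw [abs_of_nonneg h, abs_of_nonneg (Real.arcsin_nonneg.2 h)]
  · rw [abs_of_neg h, Real.arcsin_neg, abs_of_neg (Real.arcsin_lt_zero.2 h)]

lemma my_arg_bound (z : ℂ) (L B : ℝ) (hL : 0 < L) (hre : L ≤ z.re) (him : |z.im| ≤ B) :
    |Complex.arg z| ≤ π/2 * (B/L) := by
  have hz : (0:ℝ) < ‖z‖ := by
    have hz0 : z ≠ 0 := by intro h; rw [h] at hre; simp at hre; linarith
    simpa using norm_pos_iff.mpr hz0
  have hrle : L ≤ ‖z‖ := le_trans hre (Complex.re_le_norm z)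
  rw [Complex.arg_of_re_nonneg (by linarith), my_abs_arcsin, abs_div,
    abs_of_nonneg hz.le]
  have h1 : |z.im| / ‖z‖ ≤ 1 := by
    rw [div_le_one hz]; exact Complex.abs_im_le_norm z
  refine (my_arcsin_le (by positivity) h1).trans ?_
  have : |z.im| / ‖z‖ ≤ B / L := by
    gcongr
    exact le_trans (abs_nonneg _) him
  nlinarith [Real.pi_pos]

lemma my_rot_eq (θ θ' : ℝ) (z z' : ℂ) (hz : z ≠ 0)
    (h : Complex.exp (θ * Complex.I) * z = Complex.exp (θ' * Complex.I) * z') :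
    ∃ n : ℤ, θ + z.arg = θ' + z'.arg + 2 * π * n := by
  have habs : ‖z‖ = ‖z'‖ := by
    have := congrArg norm h
    simpa [norm_mul, Complex.norm_exp_ofReal_mul_I] using this
  rw [← Complex.norm_mul_exp_arg_mul_I z, ← Complex.norm_mul_exp_arg_mul_I z', ← habs] at h
  have hA : (0:ℝ) < ‖z‖ := by simpa using norm_pos_iff.mpr hz
  have hne : ((‖z‖ : ℝ) : ℂ) ≠ 0 := by exact_mod_cast hA.ne'
  have h2 : ((‖z‖ : ℝ):ℂ) * (Complex.exp (θ*Complex.I) * Complex.exp (z.arg*Complex.I))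
      = ((‖z‖ : ℝ):ℂ) * (Complex.exp (θ'*Complex.I) * Complex.exp (z'.arg*Complex.I)) := by
    linear_combination h
  have h3 := mul_left_cancel₀ hne h2
  rw [← Complex.exp_add, ← Complex.exp_add, Complex.exp_eq_exp_iff_exists_int] at h3
  obtain ⟨n, hn⟩ := h3
  refine ⟨n, ?_⟩
  have him := congrArg Complex.im hn
  simp [Complex.add_im, Complex.mul_im, Complex.mul_re] at him
  linarith

lemma my_theta_mem (β : ℝ) (hβ : β ≤ 1) (j ℓ : ℕ) (hj : 1 ≤ j) (hℓ : (ℓ:ℤ) ≤ ljmax β j) :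
    0 ≤ Theta β j ℓ ∧ Theta β j ℓ ≤ 2*π + π/5 := by
  have hj1 : (1:ℝ) ≤ (j:ℝ) := by exact_mod_cast hj
  set t : ℝ := (2:ℝ) ^ ((β-1)*(j:ℝ)) with ht
  set s : ℝ := (2:ℝ) ^ ((1-β)*(j:ℝ)) with hs
  have ht0 : 0 < t := Real.rpow_pos_of_pos two_pos _
  have hs0 : 0 < s := Real.rpow_pos_of_pos two_pos _
  have ht1 : t ≤ 1 :=
    Real.rpow_le_one_of_one_le_of_nonpos one_le_two (by nlinarith)
  have hts : t * s = 1 := by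
    rw [ht, hs, ← Real.rpow_add two_pos]
    norm_num [show (β-1)*(j:ℝ) + (1-β)*(j:ℝ) = 0 by ring]
  have hl : (ℓ:ℝ) ≤ 10 * s + 1 := by
    have h1 : ((ℓ:ℤ):ℝ) ≤ ((ljmax β j : ℤ):ℝ) := by exact_mod_cast hℓ
    have h2 : ((ljmax β j : ℤ):ℝ) < 10 * s + 1 := by
      rw [ljmax]; exact_mod_cast Int.ceil_lt_add_one _
    push_cast at h1; linarith
  constructor
  · rw [Theta]; positivity
  · rw [Theta]
    have hπ := Real.pi_pos
    nlinarith [mul_pos ht0 hπ, mul_nonneg (Nat.cast_nonneg ℓ : (0:ℝ) ≤ ℓ) ht0.le]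

set_option maxHeartbeats 1000000 in
lemma my_key (α β ε : ℝ) (hβ1 : β ≤ 1) (hα1 : α ≤ 1) (hε0 : 0 < ε) (hε1 : ε < 1/32)
    (j m : ℕ) (hj : 1 ≤ j) (q0 q1 : ℝ) (hq0 : -ε < q0) (hq1 : |q1| ≤ 1 + ε) :
    0 < (2:ℝ)^(α*(j:ℝ)) * q0 + ((2:ℝ)^((j:ℝ)-1) + (m:ℝ) * (2:ℝ)^(α*(j:ℝ))) ∧
    |Complex.arg ((((2:ℝ)^(α*(j:ℝ)) * q0 + ((2:ℝ)^((j:ℝ)-1) + (m:ℝ) * (2:ℝ)^(α*(j:ℝ))) : ℝ) : ℂ)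
        + (((2:ℝ)^(β*(j:ℝ)) * q1 : ℝ) : ℂ) * Complex.I)|
      ≤ 4 * (1+ε) * (2:ℝ)^((β-1)*(j:ℝ)) := by
  have hj1 : (1:ℝ) ≤ (j:ℝ) := by exact_mod_cast hj
  set u : ℝ := (2:ℝ)^((j:ℝ)-1) with hu_def
  set P : ℝ := (2:ℝ)^(β*(j:ℝ)) with hP_def
  set t : ℝ := (2:ℝ)^((β-1)*(j:ℝ)) with ht_def
  set a : ℝ := (2:ℝ)^(α*(j:ℝ)) with ha_def
  have hu : 0 < u := Real.rpow_pos_of_pos two_pos _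
  have hP : 0 < P := Real.rpow_pos_of_pos two_pos _
  have ht : 0 < t := Real.rpow_pos_of_pos two_pos _
  have ha : 0 < a := Real.rpow_pos_of_pos two_pos _
  have h2b : (2:ℝ)^((j:ℝ)) = 2 * u := by
    calc (2:ℝ)^((j:ℝ)) = (2:ℝ)^((1:ℝ)+((j:ℝ)-1)) := by norm_num
    _ = 2^(1:ℝ) * 2^((j:ℝ)-1) := Real.rpow_add two_pos _ _
    _ = 2 * u := by rw [Real.rpow_one, hu_def]
  have h2a : a ≤ 2 * u := by
    rw [← h2b, ha_def]
    exact Real.rpow_le_rpow_of_exponent_le one_le_two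
      (by nlinarith [(Nat.cast_nonneg j : (0:ℝ) ≤ (j:ℝ))])
  have ht2 : t * (2 * u) = P := by
    rw [← h2b, ht_def, hP_def, ← Real.rpow_add two_pos]
    congr 1; ring
  set L : ℝ := u - ε * a with hL_def
  have hLlb : (1 - 2*ε) * u ≤ L := by nlinarith
  have hL0 : 0 < L := by nlinarith
  set w0 : ℝ := a * q0 + (u + (m:ℝ) * a) with hw0_def
  set w1 : ℝ := P * q1 with hw1_def
  have hre : L ≤ w0 := by
    have hm : (0:ℝ) ≤ (m:ℝ) := Nat.cast_nonneg m
    nlinarith [mul_pos ha (show (0:ℝ) < q0 + ε by linarith), mul_nonneg hm ha.le]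
  have him : |w1| ≤ (1+ε) * P := by
    rw [hw1_def, abs_mul, abs_of_pos hP]
    nlinarith [abs_nonneg q1]
  set z : ℂ := (w0 : ℂ) + (w1 : ℂ) * Complex.I with hz_def
  have hzre : z.re = w0 := by simp [hz_def]
  have hzim : z.im = w1 := by simp [hz_def]
  refine ⟨lt_of_lt_of_le hL0 hre, ?_⟩
  have harg := my_arg_bound z L ((1+ε)*P) hL0 (by rw [hzre]; exact hre) (by rw [hzim]; exact him)
  refine harg.trans ?_
  rw [← mul_div_assoc, div_le_iff₀ hL0]
  have hπu : π * u ≤ 4 * L := by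
    have h1 : π * u ≤ 3.15 * u := mul_le_mul_of_nonneg_right Real.pi_lt_d2.le hu.le
    have h2 : (0:ℝ) ≤ (1/4 - 8*ε) * u := mul_nonneg (by linarith) hu.le
    linarith [h1, h2, hLlb]
  have hmul := mul_le_mul_of_nonneg_left hπu (show (0:ℝ) ≤ (1+ε)*t by positivity)
  rw [← ht2]
  clear_value u P t a L w0 w1 z
  nlinarith [hmul]

set_option maxHeartbeats 1000000 in
/-- If `(j,m,ℓ), (j',m',ℓ') ∈ I₀` and `Q_{j,m,ℓ} ∩ Q_{j',m',ℓ'} ≠ ∅`,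
then `min_{k ∈ {−2,…,2}} |Θ_{j,ℓ} − Θ_{j',ℓ'} − 2πk| ≤ 4(1+ε)(2^{(β−1)j} + 2^{(β−1)j'})`. -/
theorem wavePacket_angle_relation (α β ε : ℝ)
    (hβ0 : 0 ≤ β) (hβα : β ≤ α) (hα1 : α ≤ 1) (hε : ε ∈ Set.Ioo (0:ℝ) (1/32))
    (j m ℓ j' m' ℓ' : ℕ) (hi : memI0 α β (j, m, ℓ)) (hi' : memI0 α β (j', m', ℓ'))
    (h : (Qset α β ε j m ℓ ∩ Qset α β ε j' m' ℓ').Nonempty) :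
    ∃ k : ℤ, |k| ≤ 2 ∧
      |Theta β j ℓ - Theta β j' ℓ' - 2 * Real.pi * (k:ℝ)|
        ≤ 4 * (1 + ε) * ((2:ℝ) ^ ((β - 1) * (j:ℝ)) + (2:ℝ) ^ ((β - 1) * (j':ℝ))) := by
  obtain ⟨hε0, hε1⟩ := hε
  obtain ⟨x, hx1, hx2⟩ := h
  obtain ⟨q, hq, hfq⟩ := hx1
  obtain ⟨q', hq', hfq'⟩ := hx2
  set θ := Theta β j ℓ with hθdef
  set θ' := Theta β j' ℓ' with hθ'def
  set w0 : ℝ := (2:ℝ)^(α*(j:ℝ)) * q 0 + ((2:ℝ)^((j:ℝ)-1) + (m:ℝ) * (2:ℝ)^(α*(j:ℝ))) with hw0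
  set w1 : ℝ := (2:ℝ)^(β*(j:ℝ)) * q 1 with hw1
  set v0 : ℝ := (2:ℝ)^(α*(j':ℝ)) * q' 0 + ((2:ℝ)^((j':ℝ)-1) + (m':ℝ) * (2:ℝ)^(α*(j':ℝ))) with hv0
  set v1 : ℝ := (2:ℝ)^(β*(j':ℝ)) * q' 1 with hv1
  have ex0 : x 0 = Real.cos θ * w0 - Real.sin θ * w1 := by
    rw [← hfq]
    simp [mulV, Rmat, Amat, cvec, vec2, Matrix.mulVec, dotProduct, Fin.sum_univ_two,
      hw0, hw1]
    ring
  have ex1 : x 1 = Real.sin θ * w0 + Real.cos θ * w1 := by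
    rw [← hfq]
    simp [mulV, Rmat, Amat, cvec, vec2, Matrix.mulVec, dotProduct, Fin.sum_univ_two,
      hw0, hw1]
  have ex0' : x 0 = Real.cos θ' * v0 - Real.sin θ' * v1 := by
    rw [← hfq']
    simp [mulV, Rmat, Amat, cvec, vec2, Matrix.mulVec, dotProduct, Fin.sum_univ_two,
      hv0, hv1]
    ring
  have ex1' : x 1 = Real.sin θ' * v0 + Real.cos θ' * v1 := by
    rw [← hfq']
    simp [mulV, Rmat, Amat, cvec, vec2, Matrix.mulVec, dotProduct, Fin.sum_univ_two,
      hv0, hv1]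
  set z : ℂ := (w0 : ℂ) + (w1 : ℂ) * Complex.I with hz
  set z' : ℂ := (v0 : ℂ) + (v1 : ℂ) * Complex.I with hz'
  have hzre : z.re = w0 := by simp [hz]
  have hzim : z.im = w1 := by simp [hz]
  have hzre' : z'.re = v0 := by simp [hz']
  have hzim' : z'.im = v1 := by simp [hz']
  have hEq : Complex.exp (θ * Complex.I) * z = Complex.exp (θ' * Complex.I) * z' := by
    apply Complex.ext
    · simp only [Complex.mul_re, Complex.exp_ofReal_mul_I_re, Complex.exp_ofReal_mul_I_im,
        hzre, hzim, hzre', hzim']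
      linarith [ex0, ex0']
    · simp only [Complex.mul_im, Complex.exp_ofReal_mul_I_re, Complex.exp_ofReal_mul_I_im,
        hzre, hzim, hzre', hzim']
      linarith [ex1, ex1']
  have hq1abs : |q 1| ≤ 1 + ε := abs_le.mpr ⟨by linarith [hq.2.1], (hq.2.2).le⟩
  have hq1abs' : |q' 1| ≤ 1 + ε := abs_le.mpr ⟨by linarith [hq'.2.1], (hq'.2.2).le⟩
  have hkey := my_key α β ε (hβα.trans hα1) hα1 hε0 hε1 j m hi.1 (q 0) (q 1) hq.1.1 hq1abs
  have hkey' := my_key α β ε (hβα.trans hα1) hα1 hε0 hε1 j' m' hi'.1 (q' 0) (q' 1) hq'.1.1 hq1abs'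
  rw [← hw0, ← hw1] at hkey
  rw [← hv0, ← hv1] at hkey'
  rw [← hz] at hkey
  rw [← hz'] at hkey'
  have hzne : z ≠ 0 := by
    intro hzz
    rw [hzz] at hzre
    simp at hzre
    rw [← hzre] at hkey
    exact absurd hkey.1 (lt_irrefl 0)
  obtain ⟨n, hn⟩ := my_rot_eq θ θ' z z' hzne hEq
  have hargz : |z.arg| < π/2 :=
    Complex.abs_arg_lt_pi_div_two_iff.2 (Or.inl (by rw [hzre]; exact hkey.1))
  have hargz' : |z'.arg| < π/2 :=
    Complex.abs_arg_lt_pi_div_two_iff.2 (Or.inl (by rw [hzre']; exact hkey'.1))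
  have hθb := my_theta_mem β (hβα.trans hα1) j ℓ hi.1 hi.2.2
  have hθb' := my_theta_mem β (hβα.trans hα1) j' ℓ' hi'.1 hi'.2.2
  rw [← hθdef] at hθb
  rw [← hθ'def] at hθb'
  have hπ := Real.pi_pos
  refine ⟨n, ?_, ?_⟩
  · have h1 := abs_le.1 hargz.le
    have h2 := abs_le.1 hargz'.le
    have h2pin : |2*π*(n:ℝ)| ≤ 2*π + π/5 + π := by
      have heq : 2*π*(n:ℝ) = (θ - θ') + (z.arg - z'.arg) := by linarith [hn]
      rw [heq, abs_le]
      exact ⟨by linarith [hθb.1, hθb.2, hθb'.1, hθb'.2, h1.1, h1.2, h2.1, h2.2],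
        by linarith [hθb.1, hθb.2, hθb'.1, hθb'.2, h1.1, h1.2, h2.1, h2.2]⟩
    have hmuln : 2*π*|(n:ℝ)| = |2*π*(n:ℝ)| := by
      rw [abs_mul, abs_of_pos (show (0:ℝ) < 2*π by linarith)]
    have hn2 : |(n:ℝ)| ≤ 2 := by
      by_contra hc
      push_neg at hc
      have hgt : 2*π*2 < 2*π*|(n:ℝ)| :=
        mul_lt_mul_of_pos_left hc (by linarith)
      linarith
    have hcast : ((|n|:ℤ):ℝ) ≤ 2 := by rw [Int.cast_abs]; exact hn2
    exact_mod_cast hcast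
  · have heq2 : θ - θ' - 2 * π * (n:ℝ) = z'.arg - z.arg := by linarith [hn]
    rw [heq2]
    have habs : |z'.arg - z.arg| ≤ |z'.arg| + |z.arg| := abs_sub _ _
    calc |z'.arg - z.arg| ≤ |z'.arg| + |z.arg| := habs
    _ ≤ 4*(1+ε)*(2:ℝ)^((β-1)*(j':ℝ)) + 4*(1+ε)*(2:ℝ)^((β-1)*(j:ℝ)) :=
        add_le_add hkey'.2 hkey.2
    _ = 4 * (1 + ε) * ((2:ℝ) ^ ((β - 1) * (j:ℝ)) + (2:ℝ) ^ ((β - 1) * (j':ℝ))) := by ring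
end
end

section
/- Let 0 ≤ β ≤ α ≤ 1. For every (j,m,ℓ) ∈ I₀ and every j' ∈ ℕ, the set {ℓ' ∈ ℕ₀ : there exists m' ∈ ℕ₀ such that (j',m',ℓ') ∈ I₀ and Q_{j,m,ℓ} ∩ Q_{j',m',ℓ'} ≠ ∅} has at most 65·N = 650 elements. -/
noncomputable section

open Real Set MeasureTheory Pointwise
open scoped ENNReal

/-! ### Auxiliary lemmas -/

/-- Counting lemma: naturals whose cast lies in a real interval of length `B`. -/
lemma count_helper (S : Set ℕ) (x : ℝ) (B : ℕ)
    (h : ∀ n ∈ S, x ≤ (n:ℝ) ∧ (n:ℝ) ≤ x + B) :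
    S.encard ≤ (B + 1 : ℕ) := by
  have hsub : S ⊆ ↑(Finset.Icc ⌈x⌉₊ (⌈x⌉₊ + B)) := by
    intro n hn
    obtain ⟨h1, h2⟩ := h n hn
    simp only [Finset.coe_Icc, Set.mem_Icc]
    constructor
    · exact Nat.ceil_le.2 h1
    · have : (n:ℝ) ≤ (⌈x⌉₊ : ℝ) + B := le_trans h2 (by linarith [Nat.le_ceil x])
      exact_mod_cast this
  calc S.encard ≤ (↑(Finset.Icc ⌈x⌉₊ (⌈x⌉₊ + B)) : Set ℕ).encard := Set.encard_mono hsub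
    _ = (Finset.Icc ⌈x⌉₊ (⌈x⌉₊ + B)).card := Set.encard_coe_eq_coe_finsetCard _
    _ = (B + 1 : ℕ) := by rw [Nat.card_Icc]; norm_cast; omega

/-- If `|sin z| ≤ s` then `z` is within `π s / 2` of a multiple of `π`. -/
lemma near_multiple (z s : ℝ) (h : |Real.sin z| ≤ s) :
    ∃ k : ℤ, |z - k * π| ≤ π / 2 * s := by
  refine ⟨round (z / π), ?_⟩
  have hπ := Real.pi_pos
  set k : ℤ := round (z / π) with hk
  have hd : |z - k * π| ≤ π / 2 := by
    have h1 := abs_sub_round (z / π)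
    have h2 : |z / π - k| * π ≤ 1 / 2 * π := by nlinarith [abs_nonneg (z/π - k)]
    have h3 : |z - k * π| = |z / π - k| * π := by
      rw [← abs_of_pos hπ, ← abs_mul, abs_of_pos hπ]
      field_simp
    linarith
  set d : ℝ := z - k * π with hdd
  have hsin : |Real.sin d| = |Real.sin z| := by
    have h4 : Real.sin d = Real.sin z * Real.cos (k * π) - Real.cos z * Real.sin (k * π) := by
      rw [hdd, Real.sin_sub]
    rw [h4, Real.sin_int_mul_pi, mul_zero, sub_zero, abs_mul, Real.abs_cos_int_mul_pi, mul_one]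
  have habs : |d| ≤ π / 2 := hd
  have hj : 2 / π * |d| ≤ Real.sin |d| := Real.mul_le_sin (abs_nonneg d) habs
  have hsd : Real.sin |d| = |Real.sin d| := by
    rcases abs_cases d with ⟨h5, h6⟩ | ⟨h5, h6⟩
    · rw [h5, abs_of_nonneg]
      exact Real.sin_nonneg_of_nonneg_of_le_pi h6 (by linarith)
    · rw [h5, Real.sin_neg, abs_of_nonpos (by
        exact Real.sin_nonpos_of_nonpos_of_neg_pi_le (by linarith) (by linarith))]
  have hfin : 2 / π * |d| ≤ s := by rw [hsd, hsin] at hj; linarith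
  have h7 := mul_le_mul_of_nonneg_left hfin (le_of_lt (half_pos hπ))
  have h8 : π / 2 * (2 / π * |d|) = |d| := by field_simp
  linarith

set_option maxHeartbeats 1000000 in
/-- Core estimate: if two "rotated frames" of the same point have large first
coordinates and small second coordinates, the half-angle between them is small. -/
lemma key_sin (Δ u0 u1 u'0 u'1 g b : ℝ)
    (h1 : u'0 = Real.cos Δ * u0 - Real.sin Δ * u1)
    (h2 : u'1 = Real.sin Δ * u0 + Real.cos Δ * u1)
    (hgpos : 0 < g) (hu0 : 0 < u0) (hu0' : 0 < u'0)
    (hgmax : g ≤ max u0 u'0)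
    (hb : |u1| + |u'1| ≤ b) (hbg : b ≤ g) :
    |Real.sin (Δ / 2)| ≤ b / g := by
  have p : Real.sin Δ ^ 2 + Real.cos Δ ^ 2 = 1 := Real.sin_sq_add_cos_sq Δ
  have hr : u'0 ^ 2 + u'1 ^ 2 = u0 ^ 2 + u1 ^ 2 := by
    rw [h1, h2]; linear_combination (u0 ^ 2 + u1 ^ 2) * p
  have hE : Real.sin (Δ / 2) ^ 2 = (1 - Real.cos Δ) / 2 := by
    have hc : Real.cos Δ = 2 * Real.cos (Δ / 2) ^ 2 - 1 := by
      rw [show Δ = 2 * (Δ/2) by ring, Real.cos_two_mul]; ring_nf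
    have := Real.sin_sq_add_cos_sq (Δ / 2)
    linarith
  have hiden : 2 * (u0 ^ 2 + u1 ^ 2) * (1 - Real.cos Δ)
      = (u0 - u'0) ^ 2 + (u1 - u'1) ^ 2 := by
    rw [h1, h2]; linear_combination (-(u0 ^ 2) - u1 ^ 2) * p
  have hb1 : |u1| ≤ b := by have := abs_nonneg u'1; linarith
  have hb1' : |u'1| ≤ b := by have := abs_nonneg u1; linarith
  have hmax : g ≤ u0 ∨ g ≤ u'0 := by
    rcases le_total u0 u'0 with h | h
    · right; simpa [max_eq_right h] using hgmax
    · left; simpa [max_eq_left h] using hgmax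
  have hsum : g ≤ u0 + u'0 := by rcases hmax with h | h <;> linarith
  have hd0 : |u0 - u'0| * (u0 + u'0) = |u'1 ^ 2 - u1 ^ 2| := by
    rw [← abs_of_pos (by linarith : (0:ℝ) < u0 + u'0), ← abs_mul]
    congr 1; ring_nf; linarith [hr]
  have hbnn : (0:ℝ) ≤ b := le_trans (by positivity) hb
  have habs2 : |u'1 ^ 2 - u1 ^ 2| ≤ b ^ 2 := by
    rw [abs_le]
    constructor <;> nlinarith [sq_abs u1, sq_abs u'1, abs_nonneg u1, abs_nonneg u'1]
  have hd1 : |u0 - u'0| ≤ b := by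
    have hpos : (0:ℝ) < u0 + u'0 := by linarith
    apply le_of_mul_le_mul_right _ hpos
    rw [hd0]
    calc |u'1 ^ 2 - u1 ^ 2| ≤ b ^ 2 := habs2
      _ = b * b := sq b
      _ ≤ b * (u0 + u'0) := by nlinarith
  have hd2 : |u1 - u'1| ≤ b := le_trans (abs_sub _ _) hb
  have hsq : (u0 - u'0) ^ 2 + (u1 - u'1) ^ 2 ≤ 2 * b ^ 2 := by
    have e1 : (u0 - u'0) ^ 2 ≤ b ^ 2 := by
      rw [← sq_abs]; exact pow_le_pow_left₀ (abs_nonneg _) hd1 2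
    have e2 : (u1 - u'1) ^ 2 ≤ b ^ 2 := by
      rw [← sq_abs]; exact pow_le_pow_left₀ (abs_nonneg _) hd2 2
    linarith
  have hr2 : g ^ 2 ≤ u0 ^ 2 + u1 ^ 2 := by
    rcases hmax with h | h
    · have := pow_le_pow_left₀ hgpos.le h 2
      nlinarith [sq_nonneg u1]
    · have := pow_le_pow_left₀ hgpos.le h 2
      nlinarith [sq_nonneg u'1]
  have hcos1 : Real.cos Δ ≤ 1 := Real.cos_le_one Δ
  have hfin : Real.sin (Δ / 2) ^ 2 ≤ (b / g) ^ 2 := by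
    rw [hE, div_pow]
    rw [div_le_div_iff₀ (by norm_num) (by positivity)]
    nlinarith [mul_nonneg (by linarith : (0:ℝ) ≤ 1 - Real.cos Δ)
      (by linarith : (0:ℝ) ≤ u0 ^ 2 + u1 ^ 2 - g ^ 2)]
  calc |Real.sin (Δ / 2)| = Real.sqrt (Real.sin (Δ / 2) ^ 2) := (Real.sqrt_sq_eq_abs _).symm
    _ ≤ Real.sqrt ((b / g) ^ 2) := Real.sqrt_le_sqrt hfin
    _ = b / g := Real.sqrt_sq (by positivity)

/-- Bounds on the angle `Theta`. -/
lemma Theta_bounds (β : ℝ) (hβ1 : β ≤ 1) (j ℓ : ℕ) (hℓ : (ℓ:ℤ) ≤ ljmax β j) :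
    0 ≤ Theta β j ℓ ∧ Theta β j ℓ ≤ 2 * π + π / 5 := by
  have hπ := Real.pi_pos
  have hW : (0:ℝ) < (2:ℝ) ^ ((β - 1) * (j:ℝ)) := by positivity
  have hW1 : (2:ℝ) ^ ((β - 1) * (j:ℝ)) ≤ 1 := by
    apply Real.rpow_le_one_of_one_le_of_nonpos (by norm_num)
    nlinarith [Nat.cast_nonneg (α := ℝ) j]
  constructor
  · unfold Theta; positivity
  · have hinv : (2:ℝ) ^ ((1 - β) * (j:ℝ)) * (2:ℝ) ^ ((β - 1) * (j:ℝ)) = 1 := by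
      rw [← Real.rpow_add (by norm_num)]
      rw [show (1 - β) * (j:ℝ) + (β - 1) * (j:ℝ) = 0 by ring, Real.rpow_zero]
    have hcl : (ℓ:ℝ) ≤ 10 * (2:ℝ) ^ ((1 - β) * (j:ℝ)) + 1 := by
      have h1 : (ℓ:ℝ) ≤ ((ljmax β j : ℤ) : ℝ) := by exact_mod_cast hℓ
      have h2 := Int.ceil_lt_add_one ((10:ℝ) * (2:ℝ) ^ ((1 - β) * (j:ℝ)))
      unfold ljmax at h1
      linarith
    unfold Theta
    have := mul_le_mul_of_nonneg_right hcl (le_of_lt hW)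
    calc 2 * (ℓ:ℝ) * (π / 10) * (2:ℝ) ^ ((β - 1) * (j:ℝ))
        ≤ 2 * (10 * (2:ℝ) ^ ((1 - β) * (j:ℝ)) + 1) * (π / 10) * (2:ℝ) ^ ((β - 1) * (j:ℝ)) := by
          nlinarith
      _ = 2 * π + π / 5 * (2:ℝ) ^ ((β - 1) * (j:ℝ)) := by
          linear_combination (2 * π) * hinv
      _ ≤ 2 * π + π / 5 := by nlinarith

/-- Coordinate description and size bounds for points of `Qset`. -/
lemma Qset_bounds (α β ε : ℝ) (hβ0 : 0 ≤ β) (hβα : β ≤ α) (hα1 : α ≤ 1)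
    (hε : ε ∈ Set.Ioo (0:ℝ) (1/32)) (j m ℓ : ℕ) (hm : (m:ℤ) ≤ mjmax α j)
    (x : R2) (hx : x ∈ Qset α β ε j m ℓ) :
    ∃ u0 u1 : ℝ,
      x 0 = Real.cos (Theta β j ℓ) * u0 - Real.sin (Theta β j ℓ) * u1 ∧
      x 1 = Real.sin (Theta β j ℓ) * u0 + Real.cos (Theta β j ℓ) * u1 ∧
      15/32 * (2:ℝ) ^ ((j:ℝ)) ≤ u0 ∧ u0 ≤ 4 * (2:ℝ) ^ ((j:ℝ)) ∧
      |u1| ≤ 2 * (2:ℝ) ^ (β * (j:ℝ)) := by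
  obtain ⟨q, hq, rfl⟩ := hx
  obtain ⟨⟨hq01, hq02⟩, hq11, hq12⟩ := hq
  set A : ℝ := (2:ℝ) ^ (α * (j:ℝ)) with hA
  set Bb : ℝ := (2:ℝ) ^ (β * (j:ℝ)) with hBb
  set P : ℝ := (2:ℝ) ^ ((j:ℝ)) with hP
  have hjnn : (0:ℝ) ≤ (j:ℝ) := Nat.cast_nonneg j
  have hApos : 0 < A := by positivity
  have hBpos : 0 < Bb := by positivity
  have hPpos : 0 < P := by positivity
  have hAP : A ≤ P := by
    apply Real.rpow_le_rpow_of_exponent_le (by norm_num)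
    nlinarith
  have hBP : Bb ≤ P := by
    apply Real.rpow_le_rpow_of_exponent_le (by norm_num)
    nlinarith
  have hhalf : (2:ℝ) ^ ((j:ℝ) - 1) = P / 2 := by
    rw [hP, Real.rpow_sub (by norm_num), Real.rpow_one]
  have hmR : (m:ℝ) * A ≤ P / 2 + A := by
    have h1 : (m:ℝ) ≤ (2:ℝ) ^ ((1-α) * (j:ℝ) - 1) + 1 := by
      have h2 : (m:ℝ) ≤ ((mjmax α j : ℤ) : ℝ) := by exact_mod_cast hm
      have h3 := Int.ceil_lt_add_one ((2:ℝ) ^ ((1-α) * (j:ℝ) - 1))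
      unfold mjmax at h2
      linarith
    have h4 : (2:ℝ) ^ ((1-α) * (j:ℝ) - 1) * A = P / 2 := by
      rw [hA, ← Real.rpow_add (by norm_num),
        show (1-α) * (j:ℝ) - 1 + α * (j:ℝ) = (j:ℝ) - 1 by ring, hhalf]
    nlinarith
  obtain ⟨hε0, hε1⟩ := hε
  refine ⟨A * q 0 + ((2:ℝ) ^ ((j:ℝ) - 1) + (m:ℝ) * A), Bb * q 1, ?_, ?_, ?_, ?_, ?_⟩
  · simp [mulV, Rmat, Amat, cvec, vec2, Matrix.mulVec, dotProduct,
      Fin.sum_univ_two, EuclideanSpace.equiv]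
    ring
  · simp [mulV, Rmat, Amat, cvec, vec2, Matrix.mulVec, dotProduct,
      Fin.sum_univ_two, EuclideanSpace.equiv]
    ring
  · rw [hhalf]
    have hmnn : (0:ℝ) ≤ (m:ℝ) := Nat.cast_nonneg m
    nlinarith
  · rw [hhalf]
    nlinarith
  · rw [abs_mul, abs_of_pos hBpos]
    have : |q 1| ≤ 1 + ε := by rw [abs_le]; constructor <;> linarith
    nlinarith [abs_nonneg (q 1)]

set_option maxHeartbeats 3000000 in
/-- For every `(j,m,ℓ) ∈ I₀` and every `j' ∈ ℕ = {1,2,…}`, there are at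
most `65·N = 650` values of `ℓ' ∈ ℕ₀` for which there is some `m' ∈ ℕ₀` with
`(j',m',ℓ') ∈ I₀` and `Q_{j,m,ℓ} ∩ Q_{j',m',ℓ'} ≠ ∅`. -/
theorem wavePacket_angle_count (α β ε : ℝ)
    (hβ0 : 0 ≤ β) (hβα : β ≤ α) (hα1 : α ≤ 1) (hε : ε ∈ Set.Ioo (0:ℝ) (1/32))
    (j m ℓ : ℕ) (hi : memI0 α β (j, m, ℓ)) (j' : ℕ) (hj' : 1 ≤ j') :
    {ℓ' : ℕ | ∃ m' : ℕ, memI0 α β (j', m', ℓ') ∧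
        (Qset α β ε j m ℓ ∩ Qset α β ε j' m' ℓ').Nonempty}.encard ≤ 650 := by
  classical
  obtain ⟨hj1, hm, hl⟩ := hi
  set S := {ℓ' : ℕ | ∃ m' : ℕ, memI0 α β (j', m', ℓ') ∧
      (Qset α β ε j m ℓ ∩ Qset α β ε j' m' ℓ').Nonempty} with hS
  set M : ℕ := max j j' with hM
  have hπ := Real.pi_pos
  have hβ1 : β ≤ 1 := le_trans hβα hα1
  have hMj : (j:ℝ) ≤ (M:ℝ) := by exact_mod_cast le_max_left j j'
  have hMj' : (j':ℝ) ≤ (M:ℝ) := by exact_mod_cast le_max_right j j'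
  by_cases hcase : (2:ℝ) ^ ((1-β)*(M:ℝ)) ≤ 128/15
  · -- trivial counting: all admissible ℓ' are at most 87
    have key : ∀ n ∈ S, (0:ℝ) ≤ (n:ℝ) ∧ (n:ℝ) ≤ 0 + (87:ℕ) := by
      intro n hn
      obtain ⟨m', ⟨_, _, hl'⟩, _⟩ := hn
      refine ⟨Nat.cast_nonneg n, ?_⟩
      have h1 : (n:ℝ) ≤ 10 * (2:ℝ)^((1-β)*(j':ℝ)) + 1 := by
        have h2 : (n:ℝ) ≤ ((ljmax β j' : ℤ):ℝ) := by exact_mod_cast hl'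
        have h3 := Int.ceil_lt_add_one ((10:ℝ) * (2:ℝ)^((1-β)*(j':ℝ)))
        unfold ljmax at h2; linarith
      have h4 : (2:ℝ)^((1-β)*(j':ℝ)) ≤ (2:ℝ)^((1-β)*(M:ℝ)) := by
        apply Real.rpow_le_rpow_of_exponent_le (by norm_num)
        exact mul_le_mul_of_nonneg_left hMj' (by linarith only [hβ1])
      push_cast
      linarith only [h1, h4, hcase]
    have hcount := count_helper S 0 87 key
    refine le_trans hcount ?_
    norm_num
  · push_neg at hcase
    set W : ℝ := (2:ℝ) ^ ((β-1)*(M:ℝ)) with hW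
    have hWpos : 0 < W := by positivity
    have hWinv : (2:ℝ) ^ ((1-β)*(M:ℝ)) * W = 1 := by
      rw [hW, ← Real.rpow_add (by norm_num), show (1-β)*(M:ℝ)+(β-1)*(M:ℝ) = 0 by ring,
        Real.rpow_zero]
    set K : ℝ := 128/15 * W with hK
    have hKpos : 0 < K := by positivity
    have hK1 : K < 1 := by
      have h1 := mul_lt_mul_of_pos_right hcase hWpos
      rw [hWinv] at h1
      linarith only [h1, hK]
    set θ : ℝ := Theta β j ℓ with hθ
    set c' : ℝ := π/5 * (2:ℝ) ^ ((β-1)*(j':ℝ)) with hc'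
    have hc'pos : 0 < c' := by positivity
    have hWj' : W ≤ (2:ℝ) ^ ((β-1)*(j':ℝ)) := by
      rw [hW]
      apply Real.rpow_le_rpow_of_exponent_le (by norm_num)
      exact mul_le_mul_of_nonpos_left hMj' (by linarith only [hβ1])
    have hratio : 2 * π * K ≤ 86 * c' := by
      rw [hK, hc']
      linarith only [mul_le_mul_of_nonneg_left hWj' hπ.le,
        mul_pos hπ (by positivity : (0:ℝ) < (2:ℝ)^((β-1)*(j':ℝ)))]
    have main : ∀ n ∈ S, ∃ k : ℤ, |k| ≤ 1 ∧
        ((θ - k*(2*π) - π*K)/c' ≤ (n:ℝ) ∧ (n:ℝ) ≤ (θ - k*(2*π) - π*K)/c' + 86) := by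
      intro n hn
      obtain ⟨m', ⟨hj'1, hm', hl'⟩, x, hx1, hx2⟩ := hn
      obtain ⟨u0, u1, e1, e2, hu0l, hu0u, hu1⟩ :=
        Qset_bounds α β ε hβ0 hβα hα1 hε j m ℓ hm x hx1
      obtain ⟨v0, v1, f1, f2, hv0l, hv0u, hv1⟩ :=
        Qset_bounds α β ε hβ0 hβα hα1 hε j' m' n hm' x hx2
      set θ' : ℝ := Theta β j' n with hθ'
      have p' : Real.sin θ' ^ 2 + Real.cos θ' ^ 2 = 1 := Real.sin_sq_add_cos_sq θ'
      have g1 : v0 = Real.cos (θ - θ') * u0 - Real.sin (θ - θ') * u1 := by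
        rw [Real.cos_sub, Real.sin_sub]
        linear_combination Real.cos θ' * e1 - Real.cos θ' * f1 + Real.sin θ' * e2
          - Real.sin θ' * f2 - v0 * p'
      have g2 : v1 = Real.sin (θ - θ') * u0 + Real.cos (θ - θ') * u1 := by
        rw [Real.cos_sub, Real.sin_sub]
        linear_combination (- Real.sin θ') * e1 + Real.sin θ' * f1 + Real.cos θ' * e2
          - Real.cos θ' * f2 - v1 * p'
      have hθb := Theta_bounds β hβ1 j ℓ hl
      have hθ'b := Theta_bounds β hβ1 j' n hl'
      set g : ℝ := 15/32 * (2:ℝ)^((M:ℝ)) with hg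
      have hgpos : 0 < g := by positivity
      set b : ℝ := 2 * (2:ℝ)^(β*(j:ℝ)) + 2 * (2:ℝ)^(β*(j':ℝ)) with hb
      have hgmax : g ≤ max u0 v0 := by
        rcases max_cases j j' with ⟨hMeq, _⟩ | ⟨hMeq, _⟩
        · refine le_trans ?_ (le_max_left u0 v0)
          rw [hg, hM, hMeq]
          exact hu0l
        · refine le_trans ?_ (le_max_right u0 v0)
          rw [hg, hM, hMeq]
          exact hv0l
      have hKg : K * g = 4 * (2:ℝ)^(β*(M:ℝ)) := by
        rw [hK, hg, hW]
        rw [show (128/15 : ℝ) * (2:ℝ)^((β-1)*(M:ℝ)) * (15/32 * (2:ℝ)^((M:ℝ)))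
          = 4 * ((2:ℝ)^((β-1)*(M:ℝ)) * (2:ℝ)^((M:ℝ))) by ring]
        rw [← Real.rpow_add (by norm_num), show (β-1)*(M:ℝ) + (M:ℝ) = β*(M:ℝ) by ring]
      have hbKg : b ≤ K * g := by
        have h1 : (2:ℝ)^(β*(j:ℝ)) ≤ (2:ℝ)^(β*(M:ℝ)) := by
          apply Real.rpow_le_rpow_of_exponent_le (by norm_num)
          exact mul_le_mul_of_nonneg_left hMj hβ0
        have h2 : (2:ℝ)^(β*(j':ℝ)) ≤ (2:ℝ)^(β*(M:ℝ)) := by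
          apply Real.rpow_le_rpow_of_exponent_le (by norm_num)
          exact mul_le_mul_of_nonneg_left hMj' hβ0
        rw [hKg, hb]; linarith only [h1, h2]
      have hbg : b ≤ g := by
        nlinarith only [hbKg, hK1, hgpos, hKpos]
      have hbb : |u1| + |v1| ≤ b := by rw [hb]; linarith only [hu1, hv1]
      have hu0pos : 0 < u0 := lt_of_lt_of_le (by positivity) hu0l
      have hv0pos : 0 < v0 := lt_of_lt_of_le (by positivity) hv0l
      have hsin := key_sin (θ - θ') u0 u1 v0 v1 g b g1 g2 hgpos hu0pos hv0pos hgmax hbb hbg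
      have hsinK : |Real.sin ((θ - θ')/2)| ≤ K := by
        have hdg : b / g ≤ K := by
          rw [div_le_iff₀ hgpos]; linarith only [hbKg]
        linarith only [hsin, hdg]
      obtain ⟨k, hk⟩ := near_multiple ((θ - θ')/2) K hsinK
      have hΔ : |θ - θ' - k*(2*π)| ≤ π * K := by
        have h2 : θ - θ' - k*(2*π) = 2*((θ-θ')/2 - k*π) := by ring
        rw [h2, abs_mul, abs_two]; linarith only [hk]
      have hθ'c : θ' = c' * (n:ℝ) := by rw [hθ', hc']; unfold Theta; ring
      refine ⟨k, ?_, ?_, ?_⟩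
      · have htt : |θ - θ'| ≤ 2*π + π/5 := by
          rw [abs_le]
          constructor
          · linarith only [hθb.1, hθ'b.2]
          · linarith only [hθb.2, hθ'b.1]
        have h4 : |(k:ℝ)*(2*π)| - |θ - θ'| ≤ |(k:ℝ)*(2*π) - (θ - θ')| :=
          abs_sub_abs_le_abs_sub _ _
        have h5 : |(k:ℝ)*(2*π) - (θ - θ')| = |θ - θ' - k*(2*π)| := by rw [abs_sub_comm]
        have h3 : |(k:ℝ)| * (2*π) ≤ |θ - θ'| + π*K := by
          rw [← abs_of_pos (by linarith only [hπ] : (0:ℝ) < 2*π), ← abs_mul]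
          linarith only [h4, h5.le, h5.ge, hΔ]
        have h6 : |(k:ℝ)| < 2 := by
          nlinarith only [h3, htt, hπ, mul_lt_mul_of_pos_left hK1 hπ]
        have h7 : ((|k|:ℤ):ℝ) < 2 := by rw [Int.cast_abs]; exact h6
        have h8 : |k| < 2 := by exact_mod_cast h7
        omega
      · rw [div_le_iff₀ hc'pos]
        rw [abs_le, hθ'c] at hΔ
        linarith only [hΔ.1, hΔ.2]
      · rw [abs_le, hθ'c] at hΔ
        rw [← sub_le_iff_le_add, le_div_iff₀ hc'pos]
        linarith only [hΔ.1, hratio]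
    set C : ℤ → Set ℕ := fun k =>
      {n : ℕ | (θ - k*(2*π) - π*K)/c' ≤ (n:ℝ) ∧ (n:ℝ) ≤ (θ - k*(2*π) - π*K)/c' + 86} with hC
    have hsub : S ⊆ (C (-1) ∪ C 0) ∪ C 1 := by
      intro n hn
      obtain ⟨k, hk1, hk2, hk3⟩ := main n hn
      have hk' : k = -1 ∨ k = 0 ∨ k = 1 := by
        rcases abs_le.1 hk1 with ⟨ha, hb⟩
        omega
      rcases hk' with rfl | rfl | rfl
      · exact Or.inl (Or.inl ⟨hk2, hk3⟩)
      · exact Or.inl (Or.inr ⟨hk2, hk3⟩)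
      · exact Or.inr ⟨hk2, hk3⟩
    have hC1 : ∀ k : ℤ, (C k).encard ≤ ((87:ℕ):ℕ∞) := by
      intro k
      have hcc := count_helper (C k) ((θ - k*(2*π) - π*K)/c') 86
        (fun n hn => ⟨hn.1, by push_cast; exact hn.2⟩)
      exact_mod_cast hcc
    calc S.encard ≤ ((C (-1) ∪ C 0) ∪ C 1).encard := Set.encard_mono hsub
      _ ≤ (C (-1) ∪ C 0).encard + (C 1).encard := Set.encard_union_le _ _
      _ ≤ ((C (-1)).encard + (C 0).encard) + (C 1).encard := by
          gcongr
          exact Set.encard_union_le _ _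
      _ ≤ (((87:ℕ):ℕ∞) + ((87:ℕ):ℕ∞)) + ((87:ℕ):ℕ∞) := by
          gcongr <;> exact hC1 _
      _ ≤ 650 := by norm_num
end
end

section
/- Let 0 ≤ β ≤ α ≤ 1. The set {(j',m',ℓ') ∈ I₀ : Q₀ ∩ Q_{j',m',ℓ'} ≠ ∅} has at most 135·N = 1350 elements. -/
noncomputable section

open Real Set MeasureTheory Pointwise
open scoped ENNReal

/-- Rotations preserve the Euclidean norm. -/
lemma norm_mulV_Rmat (θ : ℝ) (v : R2) : ‖mulV (Rmat θ) v‖ = ‖v‖ := by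
  have h0 : (mulV (Rmat θ) v) 0 = cos θ * v 0 - sin θ * v 1 := by
    simp [mulV, Rmat, Matrix.mulVec, dotProduct, Fin.sum_univ_two]; ring
  have h1 : (mulV (Rmat θ) v) 1 = sin θ * v 0 + cos θ * v 1 := by
    simp [mulV, Rmat, Matrix.mulVec, dotProduct, Fin.sum_univ_two]
  rw [EuclideanSpace.norm_eq, EuclideanSpace.norm_eq]
  simp only [Fin.sum_univ_two, h0, h1, Real.norm_eq_abs, sq_abs]
  congr 1
  have := sin_sq_add_cos_sq θ
  nlinarith [this]

lemma abs_coord_le_norm (v : R2) (i : Fin 2) : |v i| ≤ ‖v‖ := by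
  rw [EuclideanSpace.norm_eq]
  rw [← Real.sqrt_sq_eq_abs]
  apply Real.sqrt_le_sqrt
  fin_cases i <;> simp [Fin.sum_univ_two, sq_abs] <;> positivity

/-- There are at most `135·N = 1350` triples `(j',m',ℓ') ∈ I₀` such that
`Q₀ ∩ Q_{j,m,ℓ}` is nonempty. -/
theorem wavePacket_lowpass_count (α β ε : ℝ)
    (hβ0 : 0 ≤ β) (hβα : β ≤ α) (hα1 : α ≤ 1) (hε : ε ∈ Set.Ioo (0:ℝ) (1/32)) :
    {i : ℕ × ℕ × ℕ | memI0 α β i ∧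
        (Metric.ball (0:R2) 4 ∩ Qset α β ε i.1 i.2.1 i.2.2).Nonempty}.encard ≤ 1350 := by
  classical
  obtain ⟨hε0, hε32⟩ := hε
  set F : Finset (ℕ × ℕ × ℕ) := (Finset.Icc 1 3) ×ˢ (Finset.range 5) ×ˢ (Finset.range 81) with hF
  have hsub : {i : ℕ × ℕ × ℕ | memI0 α β i ∧
        (Metric.ball (0:R2) 4 ∩ Qset α β ε i.1 i.2.1 i.2.2).Nonempty} ⊆ ↑F := by
    rintro ⟨j, m, ℓ⟩ ⟨⟨hj1, hm, hl⟩, x, hx, q, hq, hxeq⟩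
    -- basic facts
    have h2 : (1:ℝ) ≤ 2 := by norm_num
    have hαj : (2:ℝ) ^ (α * (j:ℝ)) ≤ (2:ℝ) ^ (j:ℝ) := by
      apply Real.rpow_le_rpow_of_exponent_le h2
      nlinarith [Nat.cast_nonneg (α := ℝ) j]
    have hαjpos : (0:ℝ) < (2:ℝ) ^ (α * (j:ℝ)) := Real.rpow_pos_of_pos (by norm_num) _
    set v : R2 := mulV (Amat α β j) q + cvec α j m with hv
    have hv0 : v 0 = (2:ℝ) ^ (α * (j:ℝ)) * q 0 + ((2:ℝ) ^ ((j:ℝ) - 1) + (m:ℝ) * (2:ℝ) ^ (α * (j:ℝ))) := by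
      simp [hv, mulV, Amat, cvec, vec2, Matrix.mulVec, dotProduct, Fin.sum_univ_two]
    -- norm bound
    have hxn : ‖x‖ < 4 := by simpa [Metric.mem_ball, dist_zero_right] using hx
    have hx' : mulV (Rmat (Theta β j ℓ)) v = x := hxeq
    have hvn : ‖v‖ < 4 := by
      rw [← norm_mulV_Rmat (Theta β j ℓ) v, hx']; exact hxn
    have hv0lt : v 0 < 4 := lt_of_le_of_lt (le_trans (le_abs_self _) (abs_coord_le_norm v 0)) hvn
    -- lower bound on v 0
    have hq0 : -ε < q 0 := hq.1.1
    have hlow : (2:ℝ) ^ ((j:ℝ) - 1) - ε * (2:ℝ) ^ (j:ℝ) < 4 := by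
      have hm0 : (0:ℝ) ≤ (m:ℝ) := Nat.cast_nonneg m
      nlinarith [hv0lt, hv0, mul_le_mul_of_nonneg_left hαj (le_of_lt hε0)]
    have hjr : (2:ℝ) ^ ((j:ℝ) - 1) = (2:ℝ) ^ (j:ℝ) / 2 := by
      rw [Real.rpow_sub (by norm_num)]; norm_num
    have h2j : (2:ℝ) ^ (j:ℝ) < 16 := by
      nlinarith [hlow, hjr, Real.rpow_pos_of_pos (show (0:ℝ) < 2 by norm_num) (j:ℝ)]
    have hj3 : j ≤ 3 := by
      by_contra h
      push_neg at h
      have : (16:ℝ) ≤ (2:ℝ) ^ (j:ℝ) := by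
        rw [Real.rpow_natCast]
        calc (16:ℝ) = 2 ^ 4 := by norm_num
        _ ≤ 2 ^ j := by apply pow_le_pow_right₀ (by norm_num); omega
      linarith
    have hjr3 : (j:ℝ) ≤ 3 := by exact_mod_cast hj3
    -- m bound
    have hm4 : m < 5 := by
      have : (2:ℝ) ^ ((1-α) * (j:ℝ) - 1) ≤ 4 := by
        calc (2:ℝ) ^ ((1-α) * (j:ℝ) - 1) ≤ (2:ℝ) ^ (2:ℝ) := by
              apply Real.rpow_le_rpow_of_exponent_le h2
              have e : (1-α) * (j:ℝ) = (j:ℝ) - α * (j:ℝ) := by ring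
              have : 0 ≤ α * (j:ℝ) := mul_nonneg (le_trans hβ0 hβα) (Nat.cast_nonneg j)
              linarith
        _ = 4 := by norm_num [Real.rpow_two]
      have h4 : mjmax α j ≤ 4 := by
        unfold mjmax; exact Int.ceil_le.mpr (by exact_mod_cast this)
      have : (m:ℤ) ≤ 4 := le_trans hm h4
      omega
    have hl81 : ℓ < 81 := by
      have : (10:ℝ) * (2:ℝ) ^ ((1-β) * (j:ℝ)) ≤ 80 := by
        have : (2:ℝ) ^ ((1-β) * (j:ℝ)) ≤ (2:ℝ) ^ (3:ℝ) := by
          apply Real.rpow_le_rpow_of_exponent_le h2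
          have e : (1-β) * (j:ℝ) = (j:ℝ) - β * (j:ℝ) := by ring
          have : 0 ≤ β * (j:ℝ) := mul_nonneg hβ0 (Nat.cast_nonneg j)
          linarith
        have h8 : (2:ℝ) ^ (3:ℝ) = 8 := by
          rw [show (3:ℝ) = ((3:ℕ):ℝ) by norm_num, Real.rpow_natCast]; norm_num
        nlinarith
      have h80 : ljmax β j ≤ 80 := by
        unfold ljmax; exact Int.ceil_le.mpr (by exact_mod_cast this)
      have : (ℓ:ℤ) ≤ 80 := le_trans hl h80
      omega
    simp only [hF, Finset.coe_product, Set.mem_prod, Finset.mem_coe, Finset.mem_Icc,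
      Finset.mem_range]
    exact ⟨⟨hj1, hj3⟩, hm4, hl81⟩
  calc {i : ℕ × ℕ × ℕ | memI0 α β i ∧
        (Metric.ball (0:R2) 4 ∩ Qset α β ε i.1 i.2.1 i.2.2).Nonempty}.encard
      ≤ (↑F : Set (ℕ × ℕ × ℕ)).encard := Set.encard_le_encard hsub
    _ = (F.card : ℕ∞) := Set.encard_coe_eq_coe_finsetCard F
    _ ≤ 1350 := by
        have hc : F.card = 1215 := by rw [hF]; simp [Finset.card_product]
        rw [hc]
        norm_num
end
end
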